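/- Let a > 0 and set w(x) = x·U_1'(a x) where U_1 solves x^{2−q}·U_1'' + U_1·(U_1')^q = 0 with U_1(0)=0, U_1'(0)=1, and U_1' > 0 on [0, a]. Then w satisfies the linearized equation (d/dx)[w'(x)/U_a'(x)^q] + w(x)/x^{2−q} = 0 on (0,1], where U_a(x) = U_1(a x). -/

import Mathlib

open Real Set

lemma alg_key (q a x p s u A X P : ℝ) (ha : 0 < a) (hx : 0 < x) (hp : 0 < p)
    (hA : 0 < A) (hX : 0 < X) (hP : 0 < P)
    (hode : (A * X)⁻¹ * s + u * (P * p) = 0) :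
    ((1 * (s * a) + (1 * (s * a) + x * ((-(p * (P * p) + u * (q * P * s)) * (A * X) +
        -(u * (P * p)) * ((q - 2) * (A * X / (a * x)))) * a * a))) * (P * p * (A * (a * a)))
      - (p + x * (s * a)) * (q * (P * (A * a)) * (s * a * a))) / (P * p * (A * (a * a))) ^ 2
      + x * p / X⁻¹ = 0 := by
  have hu : u = -s / (P * p * (A * X)) := by
    field_simp at hode ⊢
    linarith
  subst hu
  field_simp
  ring

theorem linearized_equation_w (q : ℝ) (hq0 : 0 < q) (hq1 : q ≤ 1)
    (U₁ : ℝ → ℝ) (hreg : ContDiffOn ℝ 2 U₁ (Set.Ioi 0))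
    (heq : ∀ x : ℝ, 0 < x →
      x ^ (2 - q) * deriv (deriv U₁) x + U₁ x * (deriv U₁ x) ^ q = 0)
    (h0 : U₁ 0 = 0) (h0' : deriv U₁ 0 = 1)
    (a : ℝ) (ha : 0 < a) (hpos : ∀ x ∈ Set.Icc (0:ℝ) a, 0 < deriv U₁ x)
    (w Uₐ : ℝ → ℝ)
    (hw : w = fun x => x * deriv U₁ (a * x))
    (hUa : Uₐ = fun x => U₁ (a * x)) :
    ∀ x ∈ Set.Ioc (0:ℝ) 1,
      deriv (fun y => deriv w y / (deriv Uₐ y) ^ q) x + w x / x ^ (2 - q) = 0 := by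
  intro x hx
  obtain ⟨hx0, hx1⟩ := hx
  -- basic differentiability facts
  have hdiff1 : ∀ y : ℝ, 0 < y → HasDerivAt U₁ (deriv U₁ y) y := by
    intro y hy
    exact ((hreg.differentiableOn (by norm_num)).differentiableAt
      (Ioi_mem_nhds hy)).hasDerivAt
  have hC1 : ContDiffOn ℝ 1 (deriv U₁) (Set.Ioi 0) :=
    hreg.deriv_of_isOpen isOpen_Ioi (by norm_num)
  have hdiff2 : ∀ y : ℝ, 0 < y → HasDerivAt (deriv U₁) (deriv (deriv U₁) y) y := by
    intro y hy
    exact ((hC1.differentiableOn (by norm_num)).differentiableAt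
      (Ioi_mem_nhds hy)).hasDerivAt
  -- the ODE rewritten as a formula for the second derivative
  have hFeq : ∀ y : ℝ, 0 < y →
      deriv (deriv U₁) y = -(U₁ y * deriv U₁ y ^ q) * y ^ (q - 2) := by
    intro y hy
    have key : y ^ (q - 2) * y ^ (2 - q) = 1 := by
      rw [← Real.rpow_add hy]; norm_num
    linear_combination y ^ (q - 2) * heq y hy - deriv (deriv U₁) y * key
  have hax : 0 < a * x := mul_pos ha hx0
  have haxa : a * x ≤ a := by nlinarith
  have hp : 0 < deriv U₁ (a * x) := hpos _ ⟨hax.le, haxa⟩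
  -- third derivative information at a*x via the ODE
  have h1 : HasDerivAt (fun y => U₁ y * deriv U₁ y ^ q)
      (deriv U₁ (a*x) * deriv U₁ (a*x) ^ q +
        U₁ (a*x) * (q * deriv U₁ (a*x) ^ (q-1) * deriv (deriv U₁) (a*x))) (a*x) := by
    have hr : HasDerivAt (fun z : ℝ => z ^ q) (q * deriv U₁ (a*x) ^ (q-1)) (deriv U₁ (a*x)) :=
      (Real.hasStrictDerivAt_rpow_const (Or.inl hp.ne')).hasDerivAt
    exact (hdiff1 _ hax).mul (hr.comp _ (hdiff2 _ hax))
  have h2 : HasDerivAt (fun y : ℝ => y ^ (q-2)) ((q-2) * (a*x) ^ (q-2-1)) (a*x) :=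
    (Real.hasStrictDerivAt_rpow_const (Or.inl hax.ne')).hasDerivAt
  have hT : HasDerivAt (deriv (deriv U₁))
      (-(deriv U₁ (a*x) * deriv U₁ (a*x) ^ q +
          U₁ (a*x) * (q * deriv U₁ (a*x) ^ (q-1) * deriv (deriv U₁) (a*x))) * (a*x) ^ (q-2) +
        -(U₁ (a*x) * deriv U₁ (a*x) ^ q) * ((q-2) * (a*x) ^ (q-2-1))) (a*x) := by
    refine HasDerivAt.congr_of_eventuallyEq (h1.neg.mul h2) ?_
    filter_upwards [Ioi_mem_nhds hax] with y hy
    exact hFeq y hy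
  -- derivatives of w and Uₐ near x
  have hin : ∀ y : ℝ, HasDerivAt (fun z : ℝ => a * z) a y := fun y => by
    simpa using (hasDerivAt_id y).const_mul a
  have hA1 : ∀ y : ℝ, 0 < y → HasDerivAt (fun z => deriv U₁ (a * z))
      (deriv (deriv U₁) (a * y) * a) y := fun y hy =>
    (hdiff2 _ (mul_pos ha hy)).comp y (hin y)
  have hwD : ∀ y : ℝ, 0 < y → HasDerivAt w
      (1 * deriv U₁ (a * y) + y * (deriv (deriv U₁) (a * y) * a)) y := by
    intro y hy; rw [hw]
    exact (hasDerivAt_id' (x := y)).mul (hA1 y hy)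
  have hUaD : ∀ y : ℝ, 0 < y → HasDerivAt Uₐ (deriv U₁ (a * y) * a) y := by
    intro y hy; rw [hUa]
    exact (hdiff1 _ (mul_pos ha hy)).comp y (hin y)
  have hQG : (fun y => deriv w y / (deriv Uₐ y) ^ q) =ᶠ[nhds x]
      (fun y => (1 * deriv U₁ (a * y) + y * (deriv (deriv U₁) (a * y) * a)) /
        (deriv U₁ (a * y) * a) ^ q) := by
    filter_upwards [Ioi_mem_nhds hx0] with y hy
    rw [(hwD y hy).deriv, (hUaD y hy).deriv]
  -- derivative of the explicit quotient
  have hnum : HasDerivAt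
      (fun y => 1 * deriv U₁ (a * y) + y * (deriv (deriv U₁) (a * y) * a))
      (1 * (deriv (deriv U₁) (a * x) * a) +
        (1 * (deriv (deriv U₁) (a * x) * a) +
          x * ((-(deriv U₁ (a*x) * deriv U₁ (a*x) ^ q +
            U₁ (a*x) * (q * deriv U₁ (a*x) ^ (q-1) * deriv (deriv U₁) (a*x))) * (a*x) ^ (q-2) +
          -(U₁ (a*x) * deriv U₁ (a*x) ^ q) * ((q-2) * (a*x) ^ (q-2-1))) * a * a))) x :=
    ((hA1 x hx0).const_mul 1).add
      ((hasDerivAt_id' (x := x)).mul ((hT.comp x (hin x)).mul_const a))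
  have hden : HasDerivAt (fun y => (deriv U₁ (a * y) * a) ^ q)
      (q * (deriv U₁ (a * x) * a) ^ (q - 1) * (deriv (deriv U₁) (a * x) * a * a)) x :=
    by have h := ((Real.hasStrictDerivAt_rpow_const (p := q)
      (Or.inl (mul_pos hp ha).ne')).hasDerivAt).comp x ((hA1 x hx0).mul_const a); exact h
  have hne : (deriv U₁ (a * x) * a) ^ q ≠ 0 := (Real.rpow_pos_of_pos (mul_pos hp ha) q).ne'
  have hdv := (hnum.div hden hne).deriv
  simp only [Pi.div_def] at hdv
  rw [hQG.deriv_eq, hdv]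
  simp only [hw]
  -- rpow bookkeeping
  have hpq : deriv U₁ (a*x) ^ q = deriv U₁ (a*x) ^ (q-1) * deriv U₁ (a*x) := by
    rw [← Real.rpow_add_one hp.ne' (q-1)]; norm_num
  have e1 : (a*x) ^ (q-2) = a ^ (q-2) * x ^ (q-2) := Real.mul_rpow ha.le hx0.le
  have e2 : (a*x) ^ (q-2-1) = a ^ (q-2) * x ^ (q-2) / (a*x) := by
    rw [Real.rpow_sub hax, Real.rpow_one, e1]
  have e3 : (deriv U₁ (a*x) * a) ^ q =
      deriv U₁ (a*x) ^ (q-1) * deriv U₁ (a*x) * (a ^ (q-2) * (a * a)) := by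
    rw [Real.mul_rpow hp.le ha.le, hpq,
      show q = q-2+1+1 by ring, Real.rpow_add_one ha.ne', Real.rpow_add_one ha.ne']
    ring_nf
  have e4 : (deriv U₁ (a*x) * a) ^ (q-1) =
      deriv U₁ (a*x) ^ (q-1) * (a ^ (q-2) * a) := by
    rw [Real.mul_rpow hp.le ha.le, show q-1 = q-2+1 by ring, Real.rpow_add_one ha.ne']
  have e5 : (a*x) ^ (2-q) = (a ^ (q-2) * x ^ (q-2))⁻¹ := by
    rw [show (2-q) = -(q-2) by ring, Real.rpow_neg hax.le, e1]
  have e6 : x ^ (2-q) = (x ^ (q-2))⁻¹ := by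
    rw [show (2-q) = -(q-2) by ring, Real.rpow_neg hx0.le]
  have hode'' : (a ^ (q-2) * x ^ (q-2))⁻¹ * deriv (deriv U₁) (a*x) +
      U₁ (a*x) * (deriv U₁ (a*x) ^ (q-1) * deriv U₁ (a*x)) = 0 := by
    have h := heq (a*x) hax
    rw [e5, hpq] at h
    linear_combination h
  rw [e3, e4, hpq, e1, e2, e6]
  linear_combination alg_key q a x (deriv U₁ (a*x)) (deriv (deriv U₁) (a*x)) (U₁ (a*x))
    (a ^ (q-2)) (x ^ (q-2)) (deriv U₁ (a*x) ^ (q-1)) ha hx0 hp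
    (Real.rpow_pos_of_pos ha _) (Real.rpow_pos_of_pos hx0 _)
    (Real.rpow_pos_of_pos hp _) hode''
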